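/- Let x : ℝ → ℝⁿ and y : ℝ → ℝⁿ be differentiable, and suppose there exist: symmetric positive definite matrices B(t) depending continuously on t, a C¹ family of symmetric matrices Ĉ(t), a continuous function β̂ : ℝ → (0,∞), and matrices Â(t) with x'(t) − y'(t) = Â(t)(x(t) − y(t)), such that the quadratic form of Ĉ(t)Â(t) + Â(t)*Ĉ(t) + Ĉ'(t) dominates β̂(t)·B(t) (i.e., ⟨(Ĉ(t)Â(t)+Â(t)*Ĉ(t)+Ĉ'(t))z, z⟩ ≥ β̂(t)⟨B(t)z,z⟩ for all z). Then the function u(t) = ⟨Ĉ(t)(x(t)−y(t)), x(t)−y(t)⟩ is nondecreasing, and moreover u'(t) ≥ β̂(t)·⟨B(t)(x(t)−y(t)), x(t)−y(t)⟩ ≥ 0 for all t. -/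

import Mathlib

open scoped RealInnerProductSpace

theorem stmt_16 (n : ℕ)
    (x y x' y' : ℝ → EuclideanSpace ℝ (Fin n))
    (hx : ∀ t, HasDerivAt x (x' t) t) (hy : ∀ t, HasDerivAt y (y' t) t)
    (B Ch Ch' A : ℝ → EuclideanSpace ℝ (Fin n) →ₗ[ℝ] EuclideanSpace ℝ (Fin n))
    (hBcont : ∀ z, Continuous fun t => B t z)
    (hBsym : ∀ t z w, ⟪B t z, w⟫ = ⟪z, B t w⟫)
    (hBpos : ∀ t z, z ≠ 0 → 0 < ⟪B t z, z⟫)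
    (hChsym : ∀ t z w, ⟪Ch t z, w⟫ = ⟪z, Ch t w⟫)
    (hChderiv : ∀ t z, HasDerivAt (fun s => Ch s z) (Ch' t z) t)
    (hCh'cont : ∀ z, Continuous fun t => Ch' t z)
    (hA : ∀ t, x' t - y' t = A t (x t - y t))
    (β : ℝ → ℝ) (hβ : Continuous β) (hβpos : ∀ t, 0 < β t)
    (hdom : ∀ t z, β t * ⟪B t z, z⟫ ≤
      ⟪Ch t (A t z), z⟫ + ⟪Ch t z, A t z⟫ + ⟪Ch' t z, z⟫)
    (u : ℝ → ℝ) (hu : ∀ t, u t = ⟪Ch t (x t - y t), x t - y t⟫) :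
    Monotone u ∧ ∀ t, ∃ d : ℝ, HasDerivAt u d t ∧
      β t * ⟪B t (x t - y t), x t - y t⟫ ≤ d ∧
      0 ≤ β t * ⟪B t (x t - y t), x t - y t⟫ := by
  set e : ℝ → EuclideanSpace ℝ (Fin n) := fun t => x t - y t with he
  have hed : ∀ t, HasDerivAt e (A t (e t)) t := by
    intro t
    have h1 := (hx t).sub (hy t)
    rw [hA t] at h1
    exact h1
  -- basis expansion
  have hexp : ∀ z : EuclideanSpace ℝ (Fin n),
      z = ∑ i, z i • (EuclideanSpace.single i (1:ℝ)) := by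
    intro z
    have := (EuclideanSpace.basisFun (Fin n) ℝ).sum_repr z
    simp only [EuclideanSpace.basisFun_repr, EuclideanSpace.basisFun_apply] at this
    exact this.symm
  -- component derivatives
  have hcomp : ∀ t (i : Fin n), HasDerivAt (fun s => e s i) (A t (e t) i) t := by
    intro t i
    exact (EuclideanSpace.proj i (𝕜 := ℝ)).hasFDerivAt.comp_hasDerivAt t (hed t)
  have key : ∀ t, HasDerivAt (fun s => Ch s (e s)) (Ch t (A t (e t)) + Ch' t (e t)) t := by
    intro t
    have hsum : HasDerivAt (fun s => ∑ i, (e s i) • Ch s (EuclideanSpace.single i (1:ℝ)))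
        (∑ i, ((e t i) • Ch' t (EuclideanSpace.single i (1:ℝ))
              + (A t (e t) i) • Ch t (EuclideanSpace.single i (1:ℝ)))) t := by
      apply HasDerivAt.fun_sum
      intro i _
      exact (hcomp t i).smul (hChderiv t (EuclideanSpace.single i 1))
    have h1 : (fun s => ∑ i, (e s i) • Ch s (EuclideanSpace.single i (1:ℝ)))
        = fun s => Ch s (e s) := by
      funext s
      simp_rw [← map_smul]
      rw [← map_sum]
      congr 1
      exact (hexp (e s)).symm
    have h2 : (∑ i, ((e t i) • Ch' t (EuclideanSpace.single i (1:ℝ))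
              + (A t (e t) i) • Ch t (EuclideanSpace.single i (1:ℝ))))
        = Ch t (A t (e t)) + Ch' t (e t) := by
      rw [Finset.sum_add_distrib]
      rw [add_comm]
      congr 1
      · simp_rw [← map_smul]
        rw [← map_sum]
        congr 1
        exact (hexp (A t (e t))).symm
      · simp_rw [← map_smul]
        rw [← map_sum]
        congr 1
        exact (hexp (e t)).symm
    rw [h1, h2] at hsum
    exact hsum
  have hud : ∀ t, HasDerivAt u
      (⟪Ch t (e t), A t (e t)⟫ + ⟪Ch t (A t (e t)) + Ch' t (e t), e t⟫) t := by
    intro t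
    have : HasDerivAt (fun s => ⟪Ch s (e s), e s⟫)
        (⟪Ch t (e t), A t (e t)⟫ + ⟪Ch t (A t (e t)) + Ch' t (e t), e t⟫) t :=
      (key t).inner ℝ (hed t)
    have hfun : u = fun s => ⟪Ch s (e s), e s⟫ := funext fun s => hu s
    rw [hfun]
    exact this
  have hnonneg : ∀ t, 0 ≤ β t * ⟪B t (e t), e t⟫ := by
    intro t
    rcases eq_or_ne (e t) 0 with h | h
    · simp [h]
    · exact le_of_lt (mul_pos (hβpos t) (hBpos t _ h))
  have hle : ∀ t, β t * ⟪B t (e t), e t⟫ ≤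
      ⟪Ch t (e t), A t (e t)⟫ + ⟪Ch t (A t (e t)) + Ch' t (e t), e t⟫ := by
    intro t
    have := hdom t (e t)
    rw [inner_add_left]
    linarith
  constructor
  · apply monotone_of_deriv_nonneg
    · intro t
      exact (hud t).differentiableAt
    · intro t
      rw [(hud t).deriv]
      exact le_trans (hnonneg t) (hle t)
  · intro t
    exact ⟨_, hud t, hle t, hnonneg t⟩
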